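/- The class of languages accepted by quasi-deterministic sensing 5'→3' WK automata is a proper superset of 2detLIN (the class of languages accepted by deterministic sensing 5'→3' WK automata) and also a proper superset of the class of languages accepted by state-deterministic sensing 5'→3' WK automata. -/

import Mathlib

open Computability

/-- The two-letter alphabet `{a, b}`. -/
inductive Letter : Type
  | a : Letter
  | b : Letter
deriving DecidableEq

instance instFintypeLetter : Fintype Letter :=
  ⟨{Letter.a, Letter.b}, fun x => by cases x <;> simp⟩

open Letter

/-- A sensing 5'→3' Watson-Crick automaton over the alphabet `T` with state set `Q`:
an initial state `q0`, a set `F` of final states, and a transition mapping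
`δ : Q × T* × T* → 2^Q` that is nonempty for only finitely many triples. -/
structure WKAutomaton (T : Type) (Q : Type) where
  q0 : Q
  F : Set Q
  δ : Q → List T → List T → Set Q
  finite_delta : {t : Q × List T × List T | (δ t.1 t.2.1 t.2.2).Nonempty}.Finite

namespace WKAutomaton

variable {T Q : Type}

/-- One computation step on configurations:
`(q, x ++ w' ++ y) ⇒ (q', w')` iff `q' ∈ δ q x y`. -/
def Step (A : WKAutomaton T Q) (c c' : Q × List T) : Prop :=
  ∃ x y : List T, c.2 = x ++ c'.2 ++ y ∧ c'.1 ∈ A.δ c.1 x y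

/-- The accepted language: words `w` with `(q₀, w) ⇒* (q_F, λ)` for some final `q_F`. -/
def Lang (A : WKAutomaton T Q) : Set (List T) :=
  {w | ∃ qf ∈ A.F, Relation.ReflTransGen A.Step (A.q0, w) (qf, [])}

/-- `A` is deterministic: in every configuration at most one computation step
(choice of `x`, `y`, `w'`, `q'`) is applicable. -/
def Deterministic (A : WKAutomaton T Q) : Prop :=
  ∀ (q : Q) (w x₁ y₁ w₁ x₂ y₂ w₂ : List T) (q₁ q₂ : Q),
    w = x₁ ++ w₁ ++ y₁ → q₁ ∈ A.δ q x₁ y₁ →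
    w = x₂ ++ w₂ ++ y₂ → q₂ ∈ A.δ q x₂ y₂ →
    x₁ = x₂ ∧ y₁ = y₂ ∧ w₁ = w₂ ∧ q₁ = q₂

/-- `A` is quasi-deterministic: for every configuration `(q,w)`, whenever
`(q,w) ⇒ (p,u)` and `(q,w) ⇒ (r,v)`, it holds that `p = r`. -/
def QuasiDet (A : WKAutomaton T Q) : Prop :=
  ∀ (q : Q) (w : List T) (p r : Q) (u v : List T),
    A.Step (q, w) (p, u) → A.Step (q, w) (r, v) → p = r

/-- `A` is state-deterministic: for every state `q` there is at most one state `p`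
with `p ∈ δ(q,u,v)` for some words `u`, `v`. -/
def StateDet (A : WKAutomaton T Q) : Prop :=
  ∀ (q p₁ p₂ : Q) (u₁ v₁ u₂ v₂ : List T),
    p₁ ∈ A.δ q u₁ v₁ → p₂ ∈ A.δ q u₂ v₂ → p₁ = p₂

/-- `A` is stateless: `Q = F = {q₀}`. -/
def Stateless (A : WKAutomaton T Q) : Prop :=
  (∀ q : Q, q = A.q0) ∧ A.F = {A.q0}

/-- `A` is all-final: `Q = F`. -/
def AllFinal (A : WKAutomaton T Q) : Prop := A.F = Set.univ

/-- `A` is simple: at most one head reads in each step. -/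
def Simple (A : WKAutomaton T Q) : Prop :=
  ∀ (q : Q) (u v : List T), (A.δ q u v).Nonempty → u = [] ∨ v = []

/-- `A` is 1-limited: exactly one letter is read in each step. -/
def OneLimited (A : WKAutomaton T Q) : Prop :=
  ∀ (q : Q) (u v : List T), (A.δ q u v).Nonempty →
    (u = [] ∧ v.length = 1) ∨ (u.length = 1 ∧ v = [])

end WKAutomaton

/-- Equality of languages modulo the empty word. -/
def EqModLambda {T : Type} (L₁ L₂ : Set (List T)) : Prop :=
  ∀ w : List T, w ≠ [] → (w ∈ L₁ ↔ w ∈ L₂)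

/-- `L` is accepted (modulo the empty word) by some sensing 5'→3' WK automaton
with a finite state set satisfying the property `P`. -/
def AcceptsWith (T : Type) (P : ∀ Q : Type, WKAutomaton T Q → Prop)
    (L : Set (List T)) : Prop :=
  ∃ (Q : Type) (_ : Finite Q) (A : WKAutomaton T Q), P Q A ∧ EqModLambda A.Lang L

def repA (n : ℕ) : List Letter := List.replicate n a
def repB (n : ℕ) : List Letter := List.replicate n b

lemma countA_repAB (n m : ℕ) : (repA n ++ repB m).count a = n := by
  simp [repA, repB, List.count_append, List.count_replicate]

lemma countB_repAB (n m : ℕ) : (repA n ++ repB m).count b = m := by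
  simp [repA, repB, List.count_append, List.count_replicate]

lemma repAB_inj {n m n' m' : ℕ} (h : repA n ++ repB m = repA n' ++ repB m') :
    n = n' ∧ m = m' := by
  have h1 := congrArg (List.count a) h
  have h2 := congrArg (List.count b) h
  rw [countA_repAB, countA_repAB] at h1
  rw [countB_repAB, countB_repAB] at h2
  exact ⟨h1, h2⟩

lemma repA_length (n : ℕ) : (repA n).length = n := by simp [repA]
lemma repB_length (n : ℕ) : (repB n).length = n := by simp [repB]

lemma prefix_pure {x : List Letter} {p q : ℕ} (h : x <+: repA p ++ repB q)
    (hl : x.length ≤ p) : x = repA x.length := by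
  have h2 : x <+: repA p := by
    apply List.prefix_of_prefix_length_le h
    · exact (List.prefix_append _ _)
    · simpa [repA_length] using hl
  refine List.eq_replicate_iff.mpr ⟨rfl, fun e he => ?_⟩
  exact List.eq_of_mem_replicate (h2.sublist.subset he)

lemma suffix_pure {y : List Letter} {p q : ℕ} (h : y <:+ repA p ++ repB q)
    (hl : y.length ≤ q) : y = repB y.length := by
  have h2 : y <:+ repB q := by
    apply List.suffix_of_suffix_length_le h
    · exact (List.suffix_append _ _)
    · simpa [repB_length] using hl
  refine List.eq_replicate_iff.mpr ⟨rfl, fun e he => ?_⟩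
  exact List.eq_of_mem_replicate (h2.sublist.subset he)

lemma mid_decomp {p q u v : ℕ} {X : List Letter}
    (h : repA p ++ repB q = repA u ++ X ++ repB v) (hu : u ≤ p) (hv : v ≤ q) :
    X = repA (p - u) ++ repB (q - v) := by
  have hp : repA p = repA u ++ repA (p - u) := by
    rw [repA, repA, repA, ← List.replicate_add]; congr 1; omega
  have hq : repB q = repB (q - v) ++ repB v := by
    rw [repB, repB, repB, ← List.replicate_add]; congr 1; omega
  rw [hp, hq] at h
  have h' : repA u ++ ((repA (p-u) ++ repB (q-v)) ++ repB v)
      = repA u ++ ((X) ++ repB v) := by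
    simpa [List.append_assoc] using h
  have h'' := List.append_cancel_left h'
  exact (List.append_cancel_right h'').symm

section Chains
variable {α : Type*} {R : α → α → Prop}

lemma rtg_of_chain (g : ℕ → α) (i j : ℕ) (hij : i ≤ j)
    (h : ∀ k, i ≤ k → k < j → R (g k) (g (k+1))) :
    Relation.ReflTransGen R (g i) (g j) := by
  induction j, hij using Nat.le_induction with
  | base => exact Relation.ReflTransGen.refl
  | succ m hm ih =>
    exact (ih (fun k hk hk' => h k hk (by omega))).tail (h m hm (by omega))

lemma chain_of_rtg {x y : α} (h : Relation.ReflTransGen R x y) :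
    ∃ (L : ℕ) (g : ℕ → α), g 0 = x ∧ g L = y ∧ ∀ k < L, R (g k) (g (k+1)) := by
  induction h with
  | refl => exact ⟨0, fun _ => x, rfl, rfl, by omega⟩
  | @tail b c _ hstep ih =>
    obtain ⟨L, g, h0, hL, hs⟩ := ih
    refine ⟨L + 1, fun k => if k ≤ L then g k else c, by simpa using h0, by simp, ?_⟩
    intro k hk
    by_cases hkL : k < L
    · have e1 : k ≤ L := by omega
      have e2 : k + 1 ≤ L := by omega
      simp only [e1, e2, if_pos]
      exact hs k hkL
    · have hk' : k = L := by omega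
      subst hk'
      have e2 : ¬ (k + 1 ≤ k) := by omega
      simp only [le_refl, if_pos, e2, if_neg, hL]
      exact hstep

lemma chain_of_rtg_nodup {x y : α} (h : Relation.ReflTransGen R x y) :
    ∃ (L : ℕ) (g : ℕ → α), g 0 = x ∧ g L = y ∧ (∀ k < L, R (g k) (g (k+1))) ∧
      ∀ k l, k < l → l ≤ L → g k ≠ g l := by
  obtain ⟨L, g, h0, hL, hs⟩ := chain_of_rtg h
  clear h
  induction L using Nat.strong_induction_on generalizing g with
  | _ L ih =>
    by_cases hdup : ∃ k l, k < l ∧ l ≤ L ∧ g k = g l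
    · obtain ⟨k, l, hkl, hlL, he⟩ := hdup
      set d := l - k with hd
      have hd1 : 1 ≤ d := by omega
      refine ih (L - d) (by omega) (fun t => if t ≤ k then g t else g (t + d))
        (by simpa using h0) ?_ ?_
      · by_cases hc : L - d ≤ k
        · have hLd : L - d = k := by omega
          have hlL' : l = L := by omega
          simp only [hc, if_pos, hLd]
          rw [he, hlL', hL]; simp
        · simp only [hc, if_neg]
          rw [show L - d + d = L by omega]
          exact hL
      · intro t ht
        by_cases h1 : t + 1 ≤ k
        · have e1 : t ≤ k := by omega
          simp only [e1, h1, if_pos]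
          exact hs t (by omega)
        · by_cases h2 : t ≤ k
          · have ht' : t = k := by omega
            subst ht'
            simp only [h2, if_pos, h1, if_neg]
            have he2 : g t = g (t + d) := by
              rw [show t + d = l by omega]; exact he
            rw [he2, show t + 1 + d = (t + d) + 1 by omega]
            exact hs _ (by omega)
          · simp only [h2, if_neg, h1, if_neg]
            rw [show t + 1 + d = (t + d) + 1 by omega]
            exact hs _ (by omega)
    · push_neg at hdup
      exact ⟨L, g, h0, hL, hs, fun k l hkl hlL => hdup k l hkl hlL⟩

end Chains

section WKChains
open WKAutomaton
variable {T Q : Type}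

lemma step_infix (A : WKAutomaton T Q) {c c' : Q × List T} (h : A.Step c c') :
    c'.2 <:+: c.2 := by
  obtain ⟨x, y, hw, _⟩ := h
  exact ⟨x, y, hw.symm⟩

lemma chain_infix (A : WKAutomaton T Q) (g : ℕ → Q × List T) (L : ℕ)
    (hs : ∀ k < L, A.Step (g k) (g (k+1))) {i j : ℕ} (hij : i ≤ j) (hjL : j ≤ L) :
    (g j).2 <:+: (g i).2 := by
  induction j, hij using Nat.le_induction with
  | base => exact List.infix_refl _
  | succ m hm ih =>
    exact (step_infix A (hs m (by omega))).trans (ih (by omega))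

end WKChains

/-! ### The quasi-deterministic automaton for part 3 -/

def A3 : WKAutomaton Letter Unit where
  q0 := ()
  F := Set.univ
  δ := fun _ x y => {_u | x = [Letter.a] ∧ (y = [Letter.b] ∨ y = [Letter.b, Letter.b])}
  finite_delta := by
    apply Set.Finite.subset
      ((Set.finite_singleton (((), [Letter.a], [Letter.b, Letter.b]) : Unit × List Letter × List Letter)).insert
        ((), [Letter.a], [Letter.b]))
    rintro ⟨⟨⟩, x, y⟩ ⟨u, hx, hy⟩
    simp only [] at hx hy
    subst hx
    rcases hy with hy | hy <;> subst hy <;> simp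

lemma A3_quasiDet : A3.QuasiDet := fun _ _ p r _ _ _ _ => Subsingleton.elim p r

open Letter in
lemma repAB_cons (n m v : ℕ) :
    repA (n+1) ++ repB (m+v) = [a] ++ (repA n ++ repB m) ++ repB v := by
  simp only [repA, repB, List.replicate_add, List.replicate_succ]
  simp [List.append_assoc]

open Letter in
lemma A3_mem1 (n : ℕ) : (repA n ++ repB n) ∈ A3.Lang := by
  refine ⟨(), trivial, ?_⟩
  induction n with
  | zero =>
    show Relation.ReflTransGen A3.Step (A3.q0, repA 0 ++ repB 0) ((), [])
    exact Relation.ReflTransGen.refl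
  | succ n ih =>
    refine Relation.ReflTransGen.head ?_ ih
    refine ⟨[a], [b], ?_, ?_⟩
    · show repA (n+1) ++ repB (n+1) = [a] ++ (repA n ++ repB n) ++ [b]
      have h1 : [b] = repB 1 := rfl
      rw [h1, repAB_cons]
    · exact ⟨rfl, Or.inl rfl⟩

open Letter in
lemma A3_mem2 (n : ℕ) : (repA n ++ repB (2*n)) ∈ A3.Lang := by
  refine ⟨(), trivial, ?_⟩
  induction n with
  | zero =>
    show Relation.ReflTransGen A3.Step (A3.q0, repA 0 ++ repB 0) ((), [])
    exact Relation.ReflTransGen.refl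
  | succ n ih =>
    refine Relation.ReflTransGen.head ?_ ih
    refine ⟨[a], [b, b], ?_, ?_⟩
    · show repA (n+1) ++ repB (2*(n+1)) = [a] ++ (repA n ++ repB (2*n)) ++ [b, b]
      have h2 : [b, b] = repB 2 := rfl
      rw [show 2*(n+1) = 2*n + 2 by omega, h2, repAB_cons]
    · exact ⟨rfl, Or.inr rfl⟩

open Letter in
lemma A3_shape_aux (c : Unit × List Letter)
    (h : Relation.ReflTransGen A3.Step c ((), [])) :
    c.2 = [] ∨ ∃ n m, c.2 = repA n ++ repB m ∧ 1 ≤ n ∧ n ≤ m ∧ m ≤ 2*n := by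
  induction h using Relation.ReflTransGen.head_induction_on with
  | refl => exact Or.inl rfl
  | head h' _ ih =>
    rename_i c1 c2 _
    obtain ⟨x, y, hw2, hδ⟩ := h'
    obtain ⟨hx, hy⟩ := hδ
    right
    have hw3 : c1.2 = [a] ++ c2.2 ++ y := by rw [← hx]; exact hw2
    rcases ih with h0 | ⟨n, m, hc, h1, h2, h3⟩
    · rcases hy with hy | hy
      · exact ⟨1, 1, by rw [hw3, h0, hy]; rfl, by omega, by omega, by omega⟩
      · exact ⟨1, 2, by rw [hw3, h0, hy]; rfl, by omega, by omega, by omega⟩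
    · rcases hy with hy | hy
      · refine ⟨n+1, m+1, ?_, by omega, by omega, by omega⟩
        rw [hw3, hc, hy, show [b] = repB 1 from rfl, ← repAB_cons]
      · refine ⟨n+1, m+2, ?_, by omega, by omega, by omega⟩
        rw [hw3, hc, hy, show [b,b] = repB 2 from rfl, ← repAB_cons]

lemma A3_shape {w : List Letter} (hw : w ∈ A3.Lang) :
    w = [] ∨ ∃ n m, w = repA n ++ repB m ∧ 1 ≤ n ∧ n ≤ m ∧ m ≤ 2*n := by
  obtain ⟨qf, _, hrtg⟩ := hw
  exact A3_shape_aux (A3.q0, w) hrtg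

lemma repA_ne_nil {n : ℕ} (h : 1 ≤ n) (m : ℕ) : repA n ++ repB m ≠ [] := by
  intro hc
  have := congrArg List.length hc
  simp [repA, repB] at this
  omega

/-! ### The quasi-deterministic automaton for part 4 -/

open Letter in
def A4 : WKAutomaton Letter (Fin 3) where
  q0 := 0
  F := {1, 2}
  δ := fun q x y =>
    {p | (x = [a] ∧ y = [] ∧ p = 1 ∧ (q = 0 ∨ q = 1)) ∨
         (x = [b] ∧ y = [] ∧ p = 2 ∧ (q = 0 ∨ q = 2))}
  finite_delta := by
    apply Set.Finite.subset (Set.Finite.insert ((0 : Fin 3), [a], ([] : List Letter))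
      ((Set.Finite.insert ((1 : Fin 3), [a], ([] : List Letter))
        ((Set.Finite.insert ((0 : Fin 3), [b], ([] : List Letter))
          (Set.finite_singleton ((2 : Fin 3), [b], ([] : List Letter))))))))
    rintro ⟨q, x, y⟩ ⟨p, hp⟩
    rcases hp with ⟨hx, hy, -, hq | hq⟩ | ⟨hx, hy, -, hq | hq⟩ <;>
      subst hx <;> subst hy <;> subst hq <;> simp

open Letter in
lemma A4_quasiDet : A4.QuasiDet := by
  rintro q w p r u v ⟨x₁, y₁, hw₁, hδ₁⟩ ⟨x₂, y₂, hw₂, hδ₂⟩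
  simp only at hw₁ hw₂
  rcases hδ₁ with ⟨hx₁, hy₁, hp₁, -⟩ | ⟨hx₁, hy₁, hp₁, -⟩ <;>
    rcases hδ₂ with ⟨hx₂, hy₂, hp₂, -⟩ | ⟨hx₂, hy₂, hp₂, -⟩ <;>
      subst hx₁ <;> subst hy₁ <;> subst hx₂ <;> subst hy₂ <;> simp_all

open Letter in
lemma A4_chain_a (N : ℕ) :
    Relation.ReflTransGen A4.Step ((1 : Fin 3), repA N) (1, []) := by
  induction N with
  | zero => exact Relation.ReflTransGen.refl
  | succ n ih =>
    refine Relation.ReflTransGen.head ⟨[a], [], ?_, ?_⟩ ih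
    · show repA (n+1) = [a] ++ repA n ++ []
      simp [repA, List.replicate_succ]
    · exact Or.inl ⟨rfl, rfl, rfl, Or.inr rfl⟩

open Letter in
lemma A4_chain_b (N : ℕ) :
    Relation.ReflTransGen A4.Step ((2 : Fin 3), repB N) (2, []) := by
  induction N with
  | zero => exact Relation.ReflTransGen.refl
  | succ n ih =>
    refine Relation.ReflTransGen.head ⟨[b], [], ?_, ?_⟩ ih
    · show repB (n+1) = [b] ++ repB n ++ []
      simp [repB, List.replicate_succ]
    · exact Or.inr ⟨rfl, rfl, rfl, Or.inr rfl⟩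

open Letter in
lemma A4_memA {N : ℕ} (h : 1 ≤ N) : repA N ∈ A4.Lang := by
  refine ⟨1, Or.inl rfl, ?_⟩
  obtain ⟨n, rfl⟩ : ∃ n, N = n + 1 := ⟨N - 1, by omega⟩
  refine Relation.ReflTransGen.head ⟨[a], [], ?_, ?_⟩ (A4_chain_a n)
  · show repA (n+1) = [a] ++ repA n ++ []
    simp [repA, List.replicate_succ]
  · exact Or.inl ⟨rfl, rfl, rfl, Or.inl rfl⟩

open Letter in
lemma A4_memB {N : ℕ} (h : 1 ≤ N) : repB N ∈ A4.Lang := by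
  refine ⟨2, Or.inr rfl, ?_⟩
  obtain ⟨n, rfl⟩ : ∃ n, N = n + 1 := ⟨N - 1, by omega⟩
  refine Relation.ReflTransGen.head ⟨[b], [], ?_, ?_⟩ (A4_chain_b n)
  · show repB (n+1) = [b] ++ repB n ++ []
    simp [repB, List.replicate_succ]
  · exact Or.inr ⟨rfl, rfl, rfl, Or.inl rfl⟩

open Letter in
lemma A4_pure_aux (e : Fin 3 × List Letter) (he : e.2 = [])
    (c : Fin 3 × List Letter) (h : Relation.ReflTransGen A4.Step c e) :
    (c.1 = 1 → ∀ l ∈ c.2, l = a) ∧ (c.1 = 2 → ∀ l ∈ c.2, l = b) ∧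
      (c.1 = 0 → (∀ l ∈ c.2, l = a) ∨ (∀ l ∈ c.2, l = b)) := by
  induction h using Relation.ReflTransGen.head_induction_on with
  | refl => rw [he]; simp
  | head h' _ ih =>
    rename_i c1 c2 _
    obtain ⟨x, y, hw2, hδ⟩ := h'
    rcases hδ with ⟨hx, hy, hp, hq⟩ | ⟨hx, hy, hp, hq⟩
    · have hpure : ∀ l ∈ c1.2, l = a := by
        intro l hl
        rw [hw2, hx, hy] at hl
        simp at hl
        rcases hl with hl | hl
        · exact hl
        · exact ih.1 hp l hl
      refine ⟨fun _ => hpure, fun h2 => ?_, fun _ => Or.inl hpure⟩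
      exfalso; rcases hq with hq | hq <;> rw [h2] at hq <;> exact absurd hq (by decide)
    · have hpure : ∀ l ∈ c1.2, l = b := by
        intro l hl
        rw [hw2, hx, hy] at hl
        simp at hl
        rcases hl with hl | hl
        · exact hl
        · exact ih.2.1 hp l hl
      refine ⟨fun h1 => ?_, fun _ => hpure, fun _ => Or.inr hpure⟩
      exfalso; rcases hq with hq | hq <;> rw [h1] at hq <;> exact absurd hq (by decide)

open Letter in
lemma A4_pure {w : List Letter} (hw : w ∈ A4.Lang) :
    (∀ l ∈ w, l = a) ∨ (∀ l ∈ w, l = b) := by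
  obtain ⟨qf, _, hrtg⟩ := hw
  exact (A4_pure_aux (qf, []) rfl (A4.q0, w) hrtg).2.2 rfl

/-! ### bound on transition lengths -/

lemma delta_bound {T Q : Type} (B : WKAutomaton T Q) :
    ∃ c, 1 ≤ c ∧ ∀ q x y, (B.δ q x y).Nonempty → x.length ≤ c ∧ y.length ≤ c := by
  have hfin := B.finite_delta
  have himg : ((fun t : Q × List T × List T => max t.2.1.length t.2.2.length) ''
      {t | (B.δ t.1 t.2.1 t.2.2).Nonempty}).Finite := hfin.image _
  obtain ⟨c₀, hc₀⟩ := himg.bddAbove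
  refine ⟨c₀ + 1, by omega, fun q x y hne => ?_⟩
  have hm : max x.length y.length ≤ c₀ := hc₀ ⟨(q,x,y), hne, rfl⟩
  omega

lemma step_len {T Q : Type} {B : WKAutomaton T Q} {c : ℕ}
    (hc : ∀ q x y, (B.δ q x y).Nonempty → x.length ≤ c ∧ y.length ≤ c)
    {u v : Q × List T} (h : B.Step u v) : u.2.length ≤ v.2.length + 2 * c := by
  obtain ⟨x, y, hw, hδ⟩ := h
  have := hc u.1 x y ⟨v.1, hδ⟩
  have := congrArg List.length hw
  simp [List.length_append] at this
  omega

lemma chain_len_lb {T Q : Type} {B : WKAutomaton T Q} {c : ℕ}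
    (hc : ∀ q x y, (B.δ q x y).Nonempty → x.length ≤ c ∧ y.length ≤ c)
    (g : ℕ → Q × List T) (L : ℕ) (hs : ∀ k < L, B.Step (g k) (g (k+1))) :
    ∀ k ≤ L, (g 0).2.length ≤ (g k).2.length + 2 * c * k := by
  intro k hk
  induction k with
  | zero => simp
  | succ m ih =>
    have h1 := ih (by omega)
    have h2 := step_len hc (hs m (by omega))
    have : 2 * c * (m + 1) = 2 * c * m + 2 * c := by ring
    omega

/-- segment replay lemma -/
lemma segment_replay {T Q : Type} (B : WKAutomaton T Q)
    (g : ℕ → Q × List T) (L : ℕ) (hs : ∀ k < L, B.Step (g k) (g (k+1)))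
    {i j : ℕ} (hij : i ≤ j) (hjL : j ≤ L) :
    ∃ X Y : List T, X ++ (g j).2 ++ Y = (g i).2 ∧
      ∀ Z : List T, Relation.ReflTransGen B.Step ((g i).1, X ++ Z ++ Y) ((g j).1, Z) := by
  induction j, hij using Nat.le_induction with
  | base =>
    refine ⟨[], [], by simp, fun Z => ?_⟩
    simpa using (Relation.ReflTransGen.refl :
      Relation.ReflTransGen B.Step ((g i).1, Z) ((g i).1, Z))
  | succ m hm ih =>
    obtain ⟨X, Y, hXY, hR⟩ := ih (by omega)
    obtain ⟨x, y, hw, hδ⟩ := hs m (by omega)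
    refine ⟨X ++ x, y ++ Y, ?_, fun Z => ?_⟩
    · calc (X ++ x) ++ (g (m+1)).2 ++ (y ++ Y)
          = X ++ (x ++ (g (m+1)).2 ++ y) ++ Y := by simp [List.append_assoc]
        _ = X ++ (g m).2 ++ Y := by rw [← hw]
        _ = (g i).2 := hXY
    · have h1 : Relation.ReflTransGen B.Step ((g i).1, X ++ (x ++ Z ++ y) ++ Y)
          ((g m).1, x ++ Z ++ y) := hR (x ++ Z ++ y)
      have h2 : B.Step ((g m).1, x ++ Z ++ y) ((g (m+1)).1, Z) := ⟨x, y, rfl, hδ⟩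
      have he : (X ++ x) ++ Z ++ (y ++ Y) = X ++ (x ++ Z ++ y) ++ Y := by
        simp [List.append_assoc]
      rw [he]
      exact h1.tail h2

/-! ### Part 4: A4.Lang is not accepted by any state-deterministic WK automaton -/

open Letter in
lemma part4_not_stateDet :
    ¬ AcceptsWith Letter (fun _ A => A.StateDet) A4.Lang := by
  rintro ⟨Q, finQ, B, hsd, heq⟩
  haveI : Finite Q := finQ
  haveI : Fintype Q := Fintype.ofFinite Q
  haveI : Nonempty Q := ⟨B.q0⟩
  set Qn := Fintype.card Q with hQn
  have hQn1 : 1 ≤ Qn := Fintype.card_pos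
  obtain ⟨c, hc1, hc⟩ := delta_bound B
  set J := Qn * (Qn + 1) with hJ
  set N := 2 * c * (J + 1) with hN
  have hN1 : 1 ≤ N := by
    calc 1 = 1 * 1 := by ring
      _ ≤ (2 * c) * (J + 1) := Nat.mul_le_mul (by omega) (by omega)
  -- chains for a^N and b^N in B
  have hmemA : repA N ∈ B.Lang := by
    refine (heq (repA N) ?_).mpr (A4_memA hN1)
    simp only [repA, ne_eq, List.replicate_eq_nil_iff]
    omega
  have hmemB : repB N ∈ B.Lang := by
    refine (heq (repB N) ?_).mpr (A4_memB hN1)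
    simp only [repB, ne_eq, List.replicate_eq_nil_iff]
    omega
  obtain ⟨fa, hfa, hrtga⟩ := hmemA
  obtain ⟨fb, hfb, hrtgb⟩ := hmemB
  obtain ⟨La, g, hg0, hgL, hgs, hgnd⟩ := chain_of_rtg_nodup hrtga
  obtain ⟨Lb, h, hh0, hhL, hhs⟩ := chain_of_rtg hrtgb
  -- chains are long
  have hLa : J + 1 ≤ La := by
    have h1 := chain_len_lb hc g La hgs La le_rfl
    rw [hg0, hgL] at h1
    simp [repA] at h1
    have h2 : (2*c) * (J+1) ≤ (2*c) * La := by
      calc (2*c)*(J+1) = N := by rw [hN]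
        _ ≤ 2 * c * La := h1
    exact Nat.le_of_mul_le_mul_left h2 (by omega)
  have hLb : J + 1 ≤ Lb := by
    have h1 := chain_len_lb hc h Lb hhs Lb le_rfl
    rw [hh0, hhL] at h1
    simp [repB] at h1
    have h2 : (2*c) * (J+1) ≤ (2*c) * Lb := by
      calc (2*c)*(J+1) = N := by rw [hN]
        _ ≤ 2 * c * Lb := h1
    exact Nat.le_of_mul_le_mul_left h2 (by omega)
  -- words along g are all a's, along h all b's
  have hga : ∀ k ≤ La, ∀ l ∈ (g k).2, l = a := by
    intro k hk l hl
    have hinf := chain_infix B g La hgs (Nat.zero_le k) hk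
    rw [hg0] at hinf
    exact List.eq_of_mem_replicate (hinf.sublist.subset hl)
  have hhb : ∀ k ≤ Lb, ∀ l ∈ (h k).2, l = b := by
    intro k hk l hl
    have hinf := chain_infix B h Lb hhs (Nat.zero_le k) hk
    rw [hh0] at hinf
    exact List.eq_of_mem_replicate (hinf.sublist.subset hl)
  -- state synchronization between the two chains
  have hsync : ∀ k, k ≤ La → k ≤ Lb → (g k).1 = (h k).1 := by
    intro k
    induction k with
    | zero => intro _ _; rw [hg0, hh0]
    | succ m ih =>
      intro h1 h2
      obtain ⟨x₁, y₁, hw₁, hδ₁⟩ := hgs m (by omega)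
      obtain ⟨x₂, y₂, hw₂, hδ₂⟩ := hhs m (by omega)
      rw [← ih (by omega) (by omega)] at hδ₂
      exact hsd (g m).1 _ _ _ _ _ _ hδ₁ hδ₂
  -- lengths antitone along g
  have hlen_anti : ∀ i j, i ≤ j → j ≤ La → (g j).2.length ≤ (g i).2.length :=
    fun i j hij hj => (chain_infix B g La hgs hij hj).length_le
  -- in any window of Qn+1 indices, some letter is consumed
  have hwin : ∀ t, t + Qn ≤ La → (g (t + Qn)).2.length < (g t).2.length := by
    intro t ht
    by_contra hcon
    push_neg at hcon
    have hwords : ∀ k ≤ Qn, (g (t + k)).2 = (g t).2 := by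
      intro k hk
      have hinf := chain_infix B g La hgs (by omega : t ≤ t + k) (by omega)
      have hl1 := hlen_anti (t + k) (t + Qn) (by omega) (by omega)
      have hl2 := hinf.length_le
      exact hinf.eq_of_length (by omega)
    have hinj : Function.Injective (fun k : Fin (Qn + 1) => (g (t + k.val)).1) := by
      intro k l hkl
      by_contra hne
      rcases Nat.lt_or_ge k.val l.val with hlt | hge
      · exact hgnd (t + k.val) (t + l.val) (by omega) (by omega)
          (Prod.ext hkl (by rw [hwords k.val (by omega), hwords l.val (by omega)]))
      · have hlt : l.val < k.val := by
          rcases Nat.lt_or_ge l.val k.val with h' | h'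
          · exact h'
          · exact absurd (Fin.ext (by omega)) hne
        exact hgnd (t + l.val) (t + k.val) (by omega) (by omega)
          (Prod.ext hkl.symm (by rw [hwords k.val (by omega), hwords l.val (by omega)]))
    have := Fintype.card_le_of_injective _ hinj
    simp [hQn] at this
  -- pigeonhole: find i < j ≤ J with same state and a gap of at least Qn+1
  obtain ⟨x, y, hxy, hψ⟩ := Fintype.exists_ne_map_eq_of_card_lt
    (fun k : Fin (Qn + 1) => (g (k.val * (Qn + 1))).1) (by simp; omega)
  obtain ⟨i, j, hgap, hjJ, hstate⟩ :
      ∃ i j, i + Qn + 1 ≤ j ∧ j ≤ J ∧ (g i).1 = (g j).1 := by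
    have hxyv : x.val ≠ y.val := fun hv => hxy (Fin.ext hv)
    rcases Nat.lt_or_ge x.val y.val with hlt | hge
    · refine ⟨x.val * (Qn+1), y.val * (Qn+1), ?_, ?_, hψ⟩
      · have : (x.val + 1) * (Qn + 1) ≤ y.val * (Qn+1) := Nat.mul_le_mul_right _ (by omega)
        nlinarith
      · calc y.val * (Qn+1) ≤ Qn * (Qn+1) := Nat.mul_le_mul_right _ (by omega)
          _ = J := hJ.symm
    · have hlt : y.val < x.val := by omega
      refine ⟨y.val * (Qn+1), x.val * (Qn+1), ?_, ?_, hψ.symm⟩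
      · have : (y.val + 1) * (Qn + 1) ≤ x.val * (Qn+1) := Nat.mul_le_mul_right _ (by omega)
        nlinarith
      · calc x.val * (Qn+1) ≤ Qn * (Qn+1) := Nat.mul_le_mul_right _ (by omega)
          _ = J := hJ.symm
  have hij : i < j := by omega
  have hiLa : i ≤ La := by omega
  have hjLa : j ≤ La := by omega
  have hiLb : i ≤ Lb := by omega
  have hconsume : (g j).2.length < (g i).2.length := by
    have h1 := hwin i (by omega)
    have h2 := hlen_anti (i + Qn) j (by omega) (by omega)
    omega
  -- build the mixed accepted word
  obtain ⟨Xh, Yh, hXYh, hRh⟩ := segment_replay B h Lb hhs (Nat.zero_le i) hiLb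
  obtain ⟨Xg, Yg, hXYg, hRg⟩ := segment_replay B g La hgs (le_of_lt hij) hjLa
  set Z : List Letter := Xg ++ (h i).2 ++ Yg with hZ
  set W : List Letter := Xh ++ Z ++ Yh with hW
  have hsuff : Relation.ReflTransGen B.Step (h i) (fb, []) := by
    rw [← hhL]
    exact rtg_of_chain h i Lb hiLb (fun k _ hk2 => hhs k hk2)
  have hW1 : Relation.ReflTransGen B.Step (B.q0, W) ((h i).1, Z) := by
    have h1 := hRh Z
    rw [hh0] at h1
    exact h1
  have hW2 : Relation.ReflTransGen B.Step ((h i).1, Z) ((h i).1, (h i).2) := by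
    have h1 := hRg ((h i).2)
    rw [← hstate, hsync i hiLa hiLb] at h1
    exact h1
  have hWacc : W ∈ B.Lang := by
    refine ⟨fb, hfb, ?_⟩
    refine (hW1.trans hW2).trans ?_
    rw [Prod.mk.eta]
    exact hsuff
  -- letter counts in W
  have hXgall : ∀ l ∈ Xg, l = a := by
    intro l hl
    exact hga i hiLa l (by rw [← hXYg]; simp [hl])
  have hYgall : ∀ l ∈ Yg, l = a := by
    intro l hl
    exact hga i hiLa l (by rw [← hXYg]; simp [hl])
  have hXhall : ∀ l ∈ Xh, l = b := by
    intro l hl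
    have hm : l ∈ (h 0).2 := by rw [← hXYh]; simp [hl]
    rw [hh0] at hm
    exact List.eq_of_mem_replicate hm
  have hYhall : ∀ l ∈ Yh, l = b := by
    intro l hl
    have hm : l ∈ (h 0).2 := by rw [← hXYh]; simp [hl]
    rw [hh0] at hm
    exact List.eq_of_mem_replicate hm
  have hhiall : ∀ l ∈ (h i).2, l = b := hhb i hiLb
  have hca : 1 ≤ W.count a := by
    have hlen := congrArg List.length hXYg
    simp [List.length_append] at hlen
    have hXg_len : Xg.count a = Xg.length :=
      List.count_eq_length.mpr (fun l hl => by rw [hXgall l hl])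
    have : 1 ≤ Xg.length + Yg.length := by omega
    have hsub : Xg.count a ≤ W.count a := by
      have : Xg <:+: W := ⟨Xh, (h i).2 ++ Yg ++ Yh, by rw [hW, hZ]; simp [List.append_assoc]⟩
      exact this.count_le a
    have hsub2 : Yg.count a ≤ W.count a := by
      have : Yg <:+: W := ⟨Xh ++ Xg ++ (h i).2, Yh, by rw [hW, hZ]; simp [List.append_assoc]⟩
      exact this.count_le a
    have hYg_len : Yg.count a = Yg.length :=
      List.count_eq_length.mpr (fun l hl => by rw [hYgall l hl])
    rcases Nat.eq_zero_or_pos Xg.length with h0 | hpos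
    · omega
    · omega
  have hcb : 1 ≤ W.count b := by
    have hinf : (h i).2 <:+: W := ⟨Xh ++ Xg, Yg ++ Yh, by rw [hW, hZ]; simp [List.append_assoc]⟩
    have hle := hinf.count_le b
    have hXYhc := congrArg (List.count b) hXYh
    simp only [List.count_append] at hXYhc
    have hrep2 : ((h 0).2).count b = N := by rw [hh0]; simp [repB, List.count_replicate]
    have hXh_inf : Xh <:+: W := ⟨[], Z ++ Yh, by rw [hW]; simp [List.append_assoc]⟩
    have hYh_inf : Yh <:+: W := ⟨Xh ++ Z, [], by rw [hW]; simp [List.append_assoc]⟩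
    have h1 := hXh_inf.count_le b
    have h2 := hYh_inf.count_le b
    omega
  have hWne : W ≠ [] := by
    intro hWnil
    rw [hWnil] at hca
    simp at hca
  have hWA4 : W ∈ A4.Lang := (heq W hWne).mp hWacc
  rcases A4_pure hWA4 with hpure | hpure
  · have : W.count b = 0 := by
      rw [List.count_eq_zero]
      intro hmem
      exact absurd (hpure b hmem) (by decide)
    omega
  · have : W.count a = 0 := by
      rw [List.count_eq_zero]
      intro hmem
      exact absurd (hpure a hmem) (by decide)
    omega

/-! ### Part 3: A3.Lang is not accepted by any deterministic WK automaton -/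

lemma mid_recomp (p q u v : ℕ) (hu : u ≤ p) (hv : v ≤ q) :
    repA p ++ repB q = repA u ++ (repA (p-u) ++ repB (q-v)) ++ repB v := by
  have hp : repA p = repA u ++ repA (p - u) := by
    rw [repA, repA, repA, ← List.replicate_add]; congr 1; omega
  have hq : repB q = repB (q - v) ++ repB v := by
    rw [repB, repB, repB, ← List.replicate_add]; congr 1; omega
  rw [hp, hq]
  simp [List.append_assoc]

open Letter in
lemma part3_not_det :
    ¬ AcceptsWith Letter (fun _ A => A.Deterministic) A3.Lang := by
  rintro ⟨Q, finQ, B, hdet, heq⟩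
  haveI : Finite Q := finQ
  haveI : Fintype Q := Fintype.ofFinite Q
  haveI : Nonempty Q := ⟨B.q0⟩
  set Qn := Fintype.card Q with hQn
  have hQn1 : 1 ≤ Qn := Fintype.card_pos
  obtain ⟨c, hc1, hc⟩ := delta_bound B
  set n := c * (Qn + 1) with hn
  have hnc : n = c * Qn + c := by rw [hn]; ring
  have hn1 : 1 ≤ n := by omega
  -- the two accepted words
  have hmem1 : repA n ++ repB n ∈ B.Lang :=
    (heq _ (repA_ne_nil hn1 n)).mpr (A3_mem1 n)
  have hmem2 : repA n ++ repB (2*n) ∈ B.Lang :=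
    (heq _ (repA_ne_nil hn1 (2*n))).mpr (A3_mem2 n)
  obtain ⟨fa, hfa, hrtga⟩ := hmem1
  obtain ⟨fb, hfb, hrtgb⟩ := hmem2
  obtain ⟨L₁, g, hg0, hgL, hgs, hgnd⟩ := chain_of_rtg_nodup hrtga
  obtain ⟨L₂, h, hh0, hhL, hhs⟩ := chain_of_rtg hrtgb
  -- the synchronization invariant
  have sync : ∀ k, k ≤ Qn → ∃ p q : ℕ,
      n - c * k ≤ p ∧ n - c * k ≤ q ∧ p ≤ n ∧ q ≤ n ∧ k ≤ L₁ ∧ k ≤ L₂ ∧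
      (g k).2 = repA p ++ repB q ∧ (h k).2 = repA p ++ repB (q + n) ∧
      (h k).1 = (g k).1 ∧
      (∀ Z : List Letter, Relation.ReflTransGen B.Step
        (B.q0, repA (n - p) ++ Z ++ repB (n - q)) ((g k).1, Z)) := by
    intro k
    induction k with
    | zero =>
      intro _
      refine ⟨n, n, by omega, by omega, le_rfl, le_rfl, Nat.zero_le _, Nat.zero_le _,
        by rw [hg0], ?_, by rw [hg0, hh0], ?_⟩
      · rw [hh0]
        show repA n ++ repB (2*n) = repA n ++ repB (n + n)
        rw [show 2*n = n + n by ring]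
      · intro Z
        rw [hg0]
        simp only [Nat.sub_self]
        show Relation.ReflTransGen B.Step (B.q0, repA 0 ++ Z ++ repB 0) (B.q0, Z)
        simp only [repA, repB, List.replicate_zero, List.nil_append, List.append_nil]
        exact Relation.ReflTransGen.refl
    | succ m ih =>
      intro hk
      obtain ⟨p, q, hp1, hq1, hp2, hq2, hL1, hL2, hgw, hhw, hhs1, hrep⟩ := ih (by omega)
      have hcm : c * m ≤ c * Qn := Nat.mul_le_mul_left c (by omega)
      have hcmm : c * (m+1) = c * m + c := by ring
      have hcm' : c * (m+1) ≤ c * Qn + c := by omega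
      have hpc : c ≤ p := by omega
      have hqc : c ≤ q := by omega
      -- the chains cannot have ended yet
      have hm1 : m < L₁ := by
        rcases Nat.lt_or_ge m L₁ with h' | h'
        · exact h'
        · exfalso
          have : m = L₁ := by omega
          rw [this, hgL] at hgw
          exact repA_ne_nil (by omega) q hgw.symm
      have hm2 : m < L₂ := by
        rcases Nat.lt_or_ge m L₂ with h' | h'
        · exact h'
        · exfalso
          have : m = L₂ := by omega
          rw [this, hhL] at hhw
          exact repA_ne_nil (by omega) (q+n) hhw.symm
      -- analyze the two steps
      obtain ⟨x₁, y₁, hw₁, hδ₁⟩ := hgs m hm1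
      obtain ⟨x₂, y₂, hw₂, hδ₂⟩ := hhs m hm2
      obtain ⟨hx₁c, hy₁c⟩ := hc _ _ _ ⟨_, hδ₁⟩
      obtain ⟨hx₂c, hy₂c⟩ := hc _ _ _ ⟨_, hδ₂⟩
      rw [hgw] at hw₁
      rw [hhw] at hw₂
      have hx₁p : x₁ = repA x₁.length :=
        prefix_pure ⟨(g (m+1)).2 ++ y₁, by rw [hw₁]; simp [List.append_assoc]⟩ (by omega)
      have hy₁p : y₁ = repB y₁.length :=
        suffix_pure (p := p) ⟨x₁ ++ (g (m+1)).2, by rw [hw₁]⟩ (by omega)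
      have hx₂p : x₂ = repA x₂.length :=
        prefix_pure ⟨(h (m+1)).2 ++ y₂, by rw [hw₂]; simp [List.append_assoc]⟩ (by omega)
      have hy₂p : y₂ = repB y₂.length :=
        suffix_pure (p := p) ⟨x₂ ++ (h (m+1)).2, by rw [hw₂]⟩ (by omega)
      set u₁ := x₁.length
      set v₁ := y₁.length
      set u₂ := x₂.length
      set v₂ := y₂.length
      have hδ₁' : (g (m+1)).1 ∈ B.δ (g m).1 (repA u₁) (repB v₁) := by
        rw [← hx₁p, ← hy₁p]; exact hδ₁
      have hδ₂' : (h (m+1)).1 ∈ B.δ (g m).1 (repA u₂) (repB v₂) := by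
        rw [← hx₂p, ← hy₂p, ← hhs1]; exact hδ₂
      -- determinism on the word a^c b^c forces the two steps to agree
      have hD := hdet (g m).1 (repA c ++ repB c)
        (repA u₁) (repB v₁) (repA (c-u₁) ++ repB (c-v₁))
        (repA u₂) (repB v₂) (repA (c-u₂) ++ repB (c-v₂))
        (g (m+1)).1 (h (m+1)).1
        (mid_recomp c c u₁ v₁ hx₁c hy₁c) hδ₁'
        (mid_recomp c c u₂ v₂ hx₂c hy₂c) hδ₂'
      obtain ⟨hxx, hyy, -, hss⟩ := hD
      have hu12 : u₁ = u₂ := by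
        have := congrArg List.length hxx
        simpa [repA_length] using this
      have hv12 : v₁ = v₂ := by
        have := congrArg List.length hyy
        simpa [repB_length] using this
      -- the new remaining words
      have hgw' : (g (m+1)).2 = repA (p - u₁) ++ repB (q - v₁) := by
        rw [hx₁p, hy₁p] at hw₁
        exact mid_decomp hw₁ (by omega) (by omega)
      have hhw' : (h (m+1)).2 = repA (p - u₁) ++ repB ((q + n) - v₁) := by
        rw [hx₂p, hy₂p, ← hu12, ← hv12] at hw₂
        exact mid_decomp hw₂ (by omega) (by omega)
      refine ⟨p - u₁, q - v₁, by omega, by omega, by omega, by omega, by omega, by omega,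
        hgw', ?_, hss.symm, ?_⟩
      · rw [hhw']
        congr 2
        omega
      · intro Z
        have h1 := hrep (repA u₁ ++ Z ++ repB v₁)
        have heqw : repA (n - (p - u₁)) ++ Z ++ repB (n - (q - v₁)) =
            repA (n - p) ++ (repA u₁ ++ Z ++ repB v₁) ++ repB (n - q) := by
          rw [show n - (p - u₁) = (n - p) + u₁ by omega,
            show n - (q - v₁) = v₁ + (n - q) by omega]
          simp only [repA, repB, List.replicate_add]
          simp only [List.append_assoc]
        rw [heqw]
        exact h1.tail ⟨repA u₁, repB v₁, rfl, hδ₁'⟩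
  -- pigeonhole on the states of chain g
  obtain ⟨x, y, hxy, hψ⟩ := Fintype.exists_ne_map_eq_of_card_lt
    (fun k : Fin (Qn + 1) => (g k.val).1) (by simp; omega)
  obtain ⟨i, j, hij, hjQ, hstate⟩ : ∃ i j, i < j ∧ j ≤ Qn ∧ (g i).1 = (g j).1 := by
    rcases Nat.lt_or_ge x.val y.val with hlt | hge
    · exact ⟨x.val, y.val, hlt, by omega, hψ⟩
    · have : y.val < x.val := by
        rcases Nat.lt_or_ge y.val x.val with h' | h'
        · exact h'
        · exact absurd (Fin.ext (by omega)) hxy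
      exact ⟨y.val, x.val, this, by omega, hψ.symm⟩
  obtain ⟨pi, qi, hpi1, hqi1, hpi2, hqi2, hiL1, hiL2, hgwi, hhwi, hhsi, hrepi⟩ :=
    sync i (by omega)
  obtain ⟨pj, qj, hpj1, hqj1, hpj2, hqj2, hjL1, hjL2, hgwj, hhwj, hhsj, hrepj⟩ :=
    sync j (by omega)
  have hcj : c * j ≤ c * Qn := Nat.mul_le_mul_left c hjQ
  have hci : c * i ≤ c * Qn := Nat.mul_le_mul_left c (by omega)
  -- monotonicity of consumption via counts
  have hmono : pj ≤ pi ∧ qj ≤ qi := by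
    have hinf := chain_infix B g L₁ hgs (le_of_lt hij) hjL1
    have h1 := hinf.count_le a
    have h2 := hinf.count_le b
    rw [hgwi, hgwj, countA_repAB, countA_repAB] at h1
    rw [hgwi, hgwj, countB_repAB, countB_repAB] at h2
    exact ⟨h1, h2⟩
  obtain ⟨hpm, hqm⟩ := hmono
  -- the cycle consumes something
  have hne : ¬ (pi = pj ∧ qi = qj) := by
    rintro ⟨hp, hq⟩
    refine hgnd i j hij hjL1 ?_
    have : (g i).2 = (g j).2 := by rw [hgwi, hgwj, hp, hq]
    exact Prod.ext hstate this
  -- suffix computations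
  have hsuffg_i : Relation.ReflTransGen B.Step (g i) (fa, []) := by
    rw [← hgL]; exact rtg_of_chain g i L₁ hiL1 (fun k _ hk2 => hgs k hk2)
  have hsuffg_j : Relation.ReflTransGen B.Step (g j) (fa, []) := by
    rw [← hgL]; exact rtg_of_chain g j L₁ hjL1 (fun k _ hk2 => hgs k hk2)
  have hsuffh_i : Relation.ReflTransGen B.Step (h i) (fb, []) := by
    rw [← hhL]; exact rtg_of_chain h i L₂ hiL2 (fun k _ hk2 => hhs k hk2)
  have hsuffh_j : Relation.ReflTransGen B.Step (h j) (fb, []) := by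
    rw [← hhL]; exact rtg_of_chain h j L₂ hjL2 (fun k _ hk2 => hhs k hk2)
  -- the pumped words, their acceptance by B, and the resulting inequalities
  have shape_of : ∀ P M : ℕ, 1 ≤ P →
      (repA P ++ repB M) ∈ B.Lang → P ≤ M ∧ M ≤ 2 * P := by
    intro P M hP hmem
    have hA3 := (heq _ (repA_ne_nil hP M)).mp hmem
    rcases A3_shape hA3 with hnil | ⟨n', m', hw, h1, h2, h3⟩
    · exact absurd hnil (repA_ne_nil hP M)
    · obtain ⟨e1, e2⟩ := repAB_inj hw
      omega
  -- (A) insert the cycle into chain g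
  have hA : (n - pj + pi) ≤ (qi + (n - qj)) ∧ (qi + (n - qj)) ≤ 2 * (n - pj + pi) := by
    apply shape_of _ _ (by omega)
    refine ⟨fa, hfa, ?_⟩
    have h1 := hrepj (repA pi ++ repB qi)
    have heqw : repA (n - pj + pi) ++ repB (qi + (n - qj)) =
        repA (n - pj) ++ (repA pi ++ repB qi) ++ repB (n - qj) := by
      simp only [repA, repB, List.replicate_add]
      simp only [List.append_assoc]
    rw [heqw]
    refine h1.trans ?_
    have : ((g j).1, repA pi ++ repB qi) = g i := by
      rw [← hstate, ← hgwi]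
    rw [this]
    exact hsuffg_i
  -- (B) delete the cycle from chain g
  have hB : (n - pi + pj) ≤ (qj + (n - qi)) ∧ (qj + (n - qi)) ≤ 2 * (n - pi + pj) := by
    apply shape_of _ _ (by omega)
    refine ⟨fa, hfa, ?_⟩
    have h1 := hrepi (repA pj ++ repB qj)
    have heqw : repA (n - pi + pj) ++ repB (qj + (n - qi)) =
        repA (n - pi) ++ (repA pj ++ repB qj) ++ repB (n - qi) := by
      simp only [repA, repB, List.replicate_add]
      simp only [List.append_assoc]
    rw [heqw]
    refine h1.trans ?_
    have : ((g i).1, repA pj ++ repB qj) = g j := by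
      rw [hstate, ← hgwj]
    rw [this]
    exact hsuffg_j
  -- (D) delete the cycle from chain h
  have hD : (n - pi + pj) ≤ ((qj + n) + (n - qi)) ∧
      ((qj + n) + (n - qi)) ≤ 2 * (n - pi + pj) := by
    apply shape_of _ _ (by omega)
    refine ⟨fb, hfb, ?_⟩
    have h1 := hrepi (repA pj ++ repB (qj + n))
    have heqw : repA (n - pi + pj) ++ repB ((qj + n) + (n - qi)) =
        repA (n - pi) ++ (repA pj ++ repB (qj + n)) ++ repB (n - qi) := by
      simp only [repA, repB, List.replicate_add]
      simp only [List.append_assoc]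
    rw [heqw]
    refine h1.trans ?_
    have : ((g i).1, repA pj ++ repB (qj + n)) = h j := by
      rw [hstate, ← hhsj, ← hhwj]
    rw [this]
    exact hsuffh_j
  omega

/-- The class of languages accepted by quasi-deterministic sensing 5'→3' WK
automata is a proper superset of 2detLIN (the class of languages accepted by
deterministic sensing 5'→3' WK automata), and also a proper superset of the
class of languages accepted by state-deterministic sensing 5'→3' WK automata. -/
theorem quasiDet_proper_superset_of_det_and_stateDet :
    (∀ (T : Type) (L : Set (List T)),
      AcceptsWith T (fun _ A => A.Deterministic) L →
      AcceptsWith T (fun _ A => A.QuasiDet) L) ∧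
    (∀ (T : Type) (L : Set (List T)),
      AcceptsWith T (fun _ A => A.StateDet) L →
      AcceptsWith T (fun _ A => A.QuasiDet) L) ∧
    (∃ L : Set (List Letter),
      AcceptsWith Letter (fun _ A => A.QuasiDet) L ∧
      ¬ AcceptsWith Letter (fun _ A => A.Deterministic) L) ∧
    (∃ L : Set (List Letter),
      AcceptsWith Letter (fun _ A => A.QuasiDet) L ∧
      ¬ AcceptsWith Letter (fun _ A => A.StateDet) L) := by
  refine ⟨?_, ?_, ?_, ?_⟩
  · rintro T L ⟨Q, finQ, A, hdet, heq⟩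
    refine ⟨Q, finQ, A, ?_, heq⟩
    rintro q w p r u v ⟨x₁, y₁, hw₁, hδ₁⟩ ⟨x₂, y₂, hw₂, hδ₂⟩
    exact (hdet q w x₁ y₁ u x₂ y₂ v p r hw₁ hδ₁ hw₂ hδ₂).2.2.2
  · rintro T L ⟨Q, finQ, A, hsd, heq⟩
    refine ⟨Q, finQ, A, ?_, heq⟩
    rintro q w p r u v ⟨x₁, y₁, hw₁, hδ₁⟩ ⟨x₂, y₂, hw₂, hδ₂⟩
    exact hsd q p r x₁ y₁ x₂ y₂ hδ₁ hδ₂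
  · exact ⟨A3.Lang, ⟨Unit, inferInstance, A3, A3_quasiDet, fun w _ => Iff.rfl⟩,
      part3_not_det⟩
  · exact ⟨A4.Lang, ⟨Fin 3, inferInstance, A4, A4_quasiDet, fun w _ => Iff.rfl⟩,
      part4_not_stateDet⟩
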